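/- The symmetric group on six letters admits an outer automorphism of order two: there exists an automorphism f of Equiv.Perm (Fin 6) such that f ∘ f = id, f ≠ id, and f is not inner, i.e. there is no g ∈ Equiv.Perm (Fin 6) with f equal to conjugation by g. -/

import Mathlib

namespace S6Outer
open Equiv

abbrev G := Equiv.Perm (Fin 6)
def sw (a b : Fin 6) : G := Equiv.swap a b
def F0 : Finset G := {sw 0 1 * sw 2 3 * sw 4 5, sw 0 2 * sw 1 4 * sw 3 5, sw 0 3 * sw 1 5 * sw 2 4, sw 0 4 * sw 1 3 * sw 2 5, sw 0 5 * sw 1 2 * sw 3 4}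
def F1 : Finset G := {sw 0 1 * sw 2 3 * sw 4 5, sw 0 2 * sw 1 5 * sw 3 4, sw 0 3 * sw 1 4 * sw 2 5, sw 0 4 * sw 1 2 * sw 3 5, sw 0 5 * sw 1 3 * sw 2 4}
def F2 : Finset G := {sw 0 1 * sw 2 5 * sw 3 4, sw 0 2 * sw 1 3 * sw 4 5, sw 0 3 * sw 1 5 * sw 2 4, sw 0 4 * sw 1 2 * sw 3 5, sw 0 5 * sw 1 4 * sw 2 3}
def F3 : Finset G := {sw 0 1 * sw 2 5 * sw 3 4, sw 0 2 * sw 1 4 * sw 3 5, sw 0 3 * sw 1 2 * sw 4 5, sw 0 4 * sw 1 5 * sw 2 3, sw 0 5 * sw 1 3 * sw 2 4}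
def F4 : Finset G := {sw 0 1 * sw 2 4 * sw 3 5, sw 0 2 * sw 1 3 * sw 4 5, sw 0 3 * sw 1 4 * sw 2 5, sw 0 4 * sw 1 5 * sw 2 3, sw 0 5 * sw 1 2 * sw 3 4}
def F5 : Finset G := {sw 0 1 * sw 2 4 * sw 3 5, sw 0 2 * sw 1 5 * sw 3 4, sw 0 3 * sw 1 2 * sw 4 5, sw 0 4 * sw 1 3 * sw 2 5, sw 0 5 * sw 1 4 * sw 2 3}

/-- The six 1-factorizations of the complete graph on six vertices, with each perfect
matching encoded as a fixed-point-free involutive permutation. -/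
def Ms : Fin 6 → Finset G := ![F0, F1, F2, F3, F4, F5]

/-- Conjugation action of `S₆` on finite sets of permutations. -/
def conjF (g : G) (s : Finset G) : Finset G := s.image fun m => g * m * g⁻¹

def t : G := sw 0 1
def c : G := finRotate 6
def τ : G := sw 0 1 * sw 2 3 * sw 4 5
def γ : G := sw 1 4 * (sw 2 3 * sw 3 5)

set_option maxRecDepth 40000

theorem Ms_inj : Function.Injective Ms := by decide
theorem hA : ∀ i, conjF t (Ms i) = Ms (τ i) := by decide
theorem hB : ∀ i, conjF c (Ms i) = Ms (γ i) := by decide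
theorem hC : ∀ i, conjF τ (Ms i) = Ms (t i) := by decide
theorem hD : ∀ i, conjF γ (Ms i) = Ms (c i) := by decide

theorem conjF_one (s : Finset G) : conjF 1 s = s := by
  simp [conjF]

theorem conjF_mul (g h : G) (s : Finset G) : conjF (g * h) s = conjF g (conjF h s) := by
  simp only [conjF, Finset.image_image]
  apply Finset.image_congr
  intro m _
  simp [mul_inv_rev, mul_assoc]

theorem hct : Subgroup.closure ({c, t} : Set G) = ⊤ := by
  have h1 : (finRotate 6).IsCycle := isCycle_finRotate (n := 4)
  have h2 : (finRotate 6).support = Finset.univ := support_finRotate (n := 4)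
  have h := Equiv.Perm.closure_cycle_adjacent_swap h1 h2 0
  rwa [show Equiv.swap (0 : Fin 6) (finRotate 6 0) = t by decide] at h

theorem eq_top_of (K : Subgroup G) (hc : c ∈ K) (ht : t ∈ K) : K = ⊤ := by
  rw [eq_top_iff, ← hct, Subgroup.closure_le]
  rintro x (rfl | rfl)
  · exact hc
  · exact ht

/-- The subgroup of elements permuting the six 1-factorizations. -/
def stab : Subgroup G where
  carrier := {g | ∀ i, ∃ j, conjF g (Ms i) = Ms j}
  one_mem' := fun i => ⟨i, conjF_one _⟩
  mul_mem' := by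
    intro a b ha hb i
    obtain ⟨j, hj⟩ := hb i
    obtain ⟨k, hk⟩ := ha j
    exact ⟨k, by rw [conjF_mul, hj, hk]⟩
  inv_mem' := by
    intro a ha
    choose v hv using ha
    have hvinj : Function.Injective v := by
      intro i i' h
      apply Ms_inj
      have : conjF a⁻¹ (Ms (v i)) = conjF a⁻¹ (Ms (v i')) := by rw [h]
      rwa [← hv, ← hv, ← conjF_mul, ← conjF_mul, inv_mul_cancel, conjF_one, conjF_one] at this
    have hvsurj : Function.Surjective v := Finite.surjective_of_injective hvinj
    intro i
    obtain ⟨i', hi'⟩ := hvsurj i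
    refine ⟨i', ?_⟩
    rw [← hi', ← hv, ← conjF_mul, inv_mul_cancel, conjF_one]

theorem stab_top : stab = ⊤ :=
  eq_top_of stab (fun i => ⟨γ i, hB i⟩) (fun i => ⟨τ i, hA i⟩)

theorem huniq (g : G) (i : Fin 6) : ∃! j, conjF g (Ms i) = Ms j := by
  have hg : g ∈ stab := stab_top ▸ Subgroup.mem_top g
  obtain ⟨j, hj⟩ := hg i
  exact ⟨j, hj, fun y hy => Ms_inj (hy.symm.trans hj)⟩

/-- The index map induced by conjugation on the six 1-factorizations. -/
def u (g : G) (i : Fin 6) : Fin 6 := Fintype.choose _ (huniq g i)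

theorem uspec (g : G) (i : Fin 6) : conjF g (Ms i) = Ms (u g i) :=
  Fintype.choose_spec _ (huniq g i)

theorem u_eq {g : G} {i j : Fin 6} (h : conjF g (Ms i) = Ms j) : u g i = j :=
  Ms_inj ((uspec g i).symm.trans h)

theorem u_one (i : Fin 6) : u 1 i = i := u_eq (conjF_one _)

theorem u_mul (g h : G) (i : Fin 6) : u (g * h) i = u g (u h i) :=
  u_eq (by rw [conjF_mul, uspec, uspec])

/-- The permutation of the six 1-factorizations induced by `g`. -/
def toPerm (g : G) : G where
  toFun := u g
  invFun := u g⁻¹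
  left_inv := fun i => by rw [← u_mul, inv_mul_cancel, u_one]
  right_inv := fun i => by rw [← u_mul, mul_inv_cancel, u_one]

/-- The exotic endomorphism of `S₆`. -/
def φ : G →* G where
  toFun := toPerm
  map_one' := Equiv.ext fun i => u_one i
  map_mul' := fun g h => Equiv.ext fun i => u_mul g h i

theorem φ_apply (g : G) (i : Fin 6) : φ g i = u g i := rfl

theorem φ_t : φ t = τ := Equiv.ext fun i => u_eq (hA i)
theorem φ_c : φ c = γ := Equiv.ext fun i => u_eq (hB i)
theorem φ_τ : φ τ = t := Equiv.ext fun i => u_eq (hC i)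
theorem φ_γ : φ γ = c := Equiv.ext fun i => u_eq (hD i)

theorem φ_surj : Function.Surjective φ := by
  rw [← MonoidHom.range_eq_top]
  exact eq_top_of _ ⟨γ, φ_γ⟩ ⟨τ, φ_τ⟩

theorem φ_bij : Function.Bijective φ := φ_surj.bijective_of_finite

theorem φ_invol : ∀ x, φ (φ x) = x := by
  have hK : MonoidHom.eqLocus (φ.comp φ) (MonoidHom.id G) = ⊤ := by
    apply eq_top_of
    · show φ (φ c) = c
      rw [φ_c, φ_γ]
    · show φ (φ t) = t
      rw [φ_t, φ_τ]
  intro x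
  exact hK.ge (Subgroup.mem_top x)

end S6Outer

/-- The symmetric group `S₆` admits an outer automorphism of order two: an automorphism `f`
with `f ∘ f = id`, `f ≠ id`, and `f` not equal to conjugation by any element. -/
theorem S6_has_outer_automorphism_of_order_two :
    ∃ f : Equiv.Perm (Fin 6) ≃* Equiv.Perm (Fin 6),
      (∀ x, f (f x) = x) ∧ f ≠ MulEquiv.refl (Equiv.Perm (Fin 6)) ∧
      ¬ ∃ g : Equiv.Perm (Fin 6), ∀ x, f x = g * x * g⁻¹ := by
  refine ⟨MulEquiv.ofBijective S6Outer.φ S6Outer.φ_bij, fun x => S6Outer.φ_invol x, ?_, ?_⟩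
  · intro h
    have ht : S6Outer.φ S6Outer.t = S6Outer.t := by
      have := DFunLike.congr_fun h S6Outer.t
      exact this
    rw [S6Outer.φ_t] at ht
    exact absurd ht (by decide)
  · rintro ⟨g, hg⟩
    have h1 : S6Outer.τ = g * S6Outer.t * g⁻¹ := by
      rw [← S6Outer.φ_t]; exact hg S6Outer.t
    have h2 : (g * S6Outer.t * g⁻¹).support.card = S6Outer.t.support.card :=
      Equiv.Perm.card_support_conj
    rw [← h1] at h2
    exact absurd h2 (by decide)
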